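/- arXiv:1306.5505 — 2 statements merged into one kernel-verified Lean document; each statement's English description precedes it below -/
import Mathlib

section
/- Under the fixed-design Gaussian linear model with a model-selection procedure Ŝ and the Select+mLS estimator β̃ with threshold τ > 0, the squared bias satisfies ‖E[β̃(Y)] − β*‖₂² ≤ 2·P(Ŝ ≠ S)·[ (σ²/n)·tr(C₁₁⁻¹) + ‖β*‖₂² + (1/τ²)·(1/n)‖Xβ*‖₂² + σ²/τ² ]. -/
open Matrix MeasureTheory ProbabilityTheory

open Real Filter Set
open scoped NNReal ENNReal

section AuxLemmas


lemma my_exp_tendsto {b : ℝ} (hb : 0 < b) :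
    Tendsto (fun x : ℝ => Real.exp (-b * x ^ 2)) atTop (nhds 0) ∧
    Tendsto (fun x : ℝ => Real.exp (-b * x ^ 2)) atBot (nhds 0) := by
  have hsq_top : Tendsto (fun x : ℝ => x ^ 2) atTop atTop := tendsto_pow_atTop two_ne_zero
  have hsq_bot : Tendsto (fun x : ℝ => x ^ 2) atBot atTop := by
    have := hsq_top.comp tendsto_neg_atBot_atTop
    simpa [Function.comp_def, neg_pow] using this
  constructor
  · have h1 : Tendsto (fun x : ℝ => -b * x ^ 2) atTop atBot := by
      have := (hsq_top.const_mul_atTop hb)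
      simpa [Function.comp_def, neg_mul] using (tendsto_neg_atTop_atBot.comp this)
    exact Real.tendsto_exp_atBot.comp h1
  · have h1 : Tendsto (fun x : ℝ => -b * x ^ 2) atBot atBot := by
      have := (hsq_bot.const_mul_atTop hb)
      simpa [Function.comp_def, neg_mul] using (tendsto_neg_atTop_atBot.comp this)
    exact Real.tendsto_exp_atBot.comp h1

lemma my_integral_mul_exp {b : ℝ} (hb : 0 < b) :
    ∫ x : ℝ, x * Real.exp (-b * x ^ 2) = 0 := by
  have hd : ∀ x : ℝ, HasDerivAt (fun y : ℝ => -(2 * b)⁻¹ * Real.exp (-b * y ^ 2))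
      (x * Real.exp (-b * x ^ 2)) x := by
    intro x
    have h1 : HasDerivAt (fun y : ℝ => -b * y ^ 2) (-b * (2 * x)) x := by
      simpa using ((hasDerivAt_pow 2 x).const_mul (-b))
    have h2 := (h1.exp).const_mul (-(2 * b)⁻¹)
    refine h2.congr_deriv ?_
    field_simp
  have hint : Integrable (fun x : ℝ => x * Real.exp (-b * x ^ 2)) :=
    integrable_mul_exp_neg_mul_sq hb
  have htop : Tendsto (fun x : ℝ => -(2 * b)⁻¹ * Real.exp (-b * x ^ 2)) atTop (nhds 0) := by
    have := ((my_exp_tendsto hb).1).const_mul (-(2 * b)⁻¹)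
    simpa using this
  have hbot : Tendsto (fun x : ℝ => -(2 * b)⁻¹ * Real.exp (-b * x ^ 2)) atBot (nhds 0) := by
    have := ((my_exp_tendsto hb).2).const_mul (-(2 * b)⁻¹)
    simpa using this
  have := MeasureTheory.integral_of_hasDerivAt_of_tendsto hd hint hbot htop
  simpa using this

lemma my_integrable_sq_exp {b : ℝ} (hb : 0 < b) :
    Integrable (fun x : ℝ => x ^ 2 * Real.exp (-b * x ^ 2)) := by
  have := integrable_rpow_mul_exp_neg_mul_sq hb (s := 2) (by norm_num)
  refine this.congr ?_
  filter_upwards with x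
  rw [show ((2 : ℝ)) = ((2 : ℕ) : ℝ) by norm_num, Real.rpow_natCast]

lemma my_integral_sq_exp {b : ℝ} (hb : 0 < b) :
    ∫ x : ℝ, x ^ 2 * Real.exp (-b * x ^ 2) = (2 * b)⁻¹ * Real.sqrt (π / b) := by
  have hd : ∀ x : ℝ, HasDerivAt (fun y : ℝ => -(2 * b)⁻¹ * Real.exp (-b * y ^ 2))
      (x * Real.exp (-b * x ^ 2)) x := by
    intro x
    have h1 : HasDerivAt (fun y : ℝ => -b * y ^ 2) (-b * (2 * x)) x := by
      simpa using ((hasDerivAt_pow 2 x).const_mul (-b))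
    have h2 := (h1.exp).const_mul (-(2 * b)⁻¹)
    refine h2.congr_deriv ?_
    field_simp
  have hu : ∀ x : ℝ, HasDerivAt (fun y : ℝ => y) 1 x := fun x => hasDerivAt_id x
  have huv' : Integrable ((fun y : ℝ => y) * (fun x : ℝ => x * Real.exp (-b * x ^ 2))) := by
    refine (my_integrable_sq_exp hb).congr ?_
    filter_upwards with x
    simp [Pi.mul_apply]
    ring
  have hu'v : Integrable ((fun _ : ℝ => (1:ℝ)) * (fun x : ℝ => -(2 * b)⁻¹ * Real.exp (-b * x ^ 2))) := by
    have := (integrable_exp_neg_mul_sq hb).const_mul (-(2 * b)⁻¹)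
    refine this.congr ?_
    filter_upwards with x
    simp [Pi.mul_apply]
  have huv : Integrable ((fun y : ℝ => y) * (fun x : ℝ => -(2 * b)⁻¹ * Real.exp (-b * x ^ 2))) := by
    have := (integrable_mul_exp_neg_mul_sq hb).const_mul (-(2 * b)⁻¹)
    refine this.congr ?_
    filter_upwards with x
    simp [Pi.mul_apply]
    ring
  have := integral_mul_deriv_eq_deriv_mul_of_integrable (fun x _ => hu x) (fun x _ => hd x) huv' hu'v huv
  simp only [one_mul] at this
  have h2 : ∫ x : ℝ, x * (x * Real.exp (-b * x ^ 2)) = ∫ x : ℝ, x ^ 2 * Real.exp (-b * x ^ 2) := by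
    congr 1; funext x; ring
  rw [h2] at this
  rw [this]
  rw [integral_const_mul, integral_gaussian]
  ring

section GaussAux
variable {v : ℝ≥0}

lemma my_pdf_eq (hv : v ≠ 0) :
    gaussianPDFReal 0 v = fun x : ℝ =>
      (Real.sqrt (2 * π * v))⁻¹ * Real.exp (-((2 * (v:ℝ))⁻¹) * x ^ 2) := by
  funext x
  rw [gaussianPDFReal]
  congr 1
  congr 1
  have hv' : (v:ℝ) ≠ 0 := by exact_mod_cast hv
  field_simp
  simp

lemma my_gauss_integral (hv : v ≠ 0) (g : ℝ → ℝ) :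
    ∫ x, g x ∂(gaussianReal 0 v) = ∫ x, gaussianPDFReal 0 v x * g x := by
  rw [gaussianReal_of_var_ne_zero 0 hv]
  have h1 : (volume.withDensity (gaussianPDF 0 v))
      = volume.withDensity (fun x => ((gaussianPDFReal 0 v x).toNNReal : ℝ≥0∞)) := rfl
  rw [h1, integral_withDensity_eq_integral_smul
    ((measurable_gaussianPDFReal 0 v).real_toNNReal) g]
  congr 1
  funext x
  rw [NNReal.smul_def, Real.coe_toNNReal _ (gaussianPDFReal_nonneg 0 v x)]
  rfl

lemma my_gauss_integrable (hv : v ≠ 0) {g : ℝ → ℝ}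
    (h : Integrable (fun x => gaussianPDFReal 0 v x * g x) volume) :
    Integrable g (gaussianReal 0 v) := by
  rw [gaussianReal_of_var_ne_zero 0 hv]
  have h1 : (volume.withDensity (gaussianPDF 0 v))
      = volume.withDensity (fun x => ((gaussianPDFReal 0 v x).toNNReal : ℝ≥0∞)) := rfl
  rw [h1, integrable_withDensity_iff_integrable_smul
    ((measurable_gaussianPDFReal 0 v).real_toNNReal)]
  refine h.congr ?_
  filter_upwards with x
  rw [NNReal.smul_def, Real.coe_toNNReal _ (gaussianPDFReal_nonneg 0 v x)]
  rfl

lemma my_vpos (hσ : (0:ℝ) < (v:ℝ)) : (0:ℝ) < (2 * (v:ℝ))⁻¹ := by positivity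

lemma my_gauss_integrable_id (hv : 0 < (v:ℝ)) :
    Integrable (fun x : ℝ => x) (gaussianReal 0 v) := by
  have hvne : v ≠ 0 := by exact_mod_cast ne_of_gt hv
  refine my_gauss_integrable hvne ?_
  rw [my_pdf_eq hvne]
  have := (integrable_mul_exp_neg_mul_sq (my_vpos hv)).const_mul (Real.sqrt (2 * π * v))⁻¹
  refine this.congr ?_
  filter_upwards with x
  ring

lemma my_gauss_integral_id (hv : 0 < (v:ℝ)) :
    ∫ x, x ∂(gaussianReal 0 v) = 0 := by
  have hvne : v ≠ 0 := by exact_mod_cast ne_of_gt hv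
  rw [my_gauss_integral hvne, my_pdf_eq hvne]
  have h1 : ∫ x : ℝ, (Real.sqrt (2 * π * v))⁻¹ * Real.exp (-((2 * (v:ℝ))⁻¹) * x ^ 2) * x
      = (Real.sqrt (2 * π * v))⁻¹ * ∫ x : ℝ, x * Real.exp (-((2 * (v:ℝ))⁻¹) * x ^ 2) := by
    rw [← integral_const_mul]
    congr 1; funext x; ring
  rw [h1, my_integral_mul_exp (my_vpos hv), mul_zero]

lemma my_gauss_integrable_sq (hv : 0 < (v:ℝ)) :
    Integrable (fun x : ℝ => x ^ 2) (gaussianReal 0 v) := by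
  have hvne : v ≠ 0 := by exact_mod_cast ne_of_gt hv
  refine my_gauss_integrable hvne ?_
  rw [my_pdf_eq hvne]
  have := (my_integrable_sq_exp (my_vpos hv)).const_mul (Real.sqrt (2 * π * v))⁻¹
  refine this.congr ?_
  filter_upwards with x
  ring

lemma my_gauss_integral_sq (hv : 0 < (v:ℝ)) :
    ∫ x, x ^ 2 ∂(gaussianReal 0 v) = v := by
  have hvne : v ≠ 0 := by exact_mod_cast ne_of_gt hv
  rw [my_gauss_integral hvne, my_pdf_eq hvne]
  have h1 : ∫ x : ℝ, (Real.sqrt (2 * π * v))⁻¹ * Real.exp (-((2 * (v:ℝ))⁻¹) * x ^ 2) * x ^ 2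
      = (Real.sqrt (2 * π * v))⁻¹ * ∫ x : ℝ, x ^ 2 * Real.exp (-((2 * (v:ℝ))⁻¹) * x ^ 2) := by
    rw [← integral_const_mul]
    congr 1; funext x; ring
  rw [h1, my_integral_sq_exp (my_vpos hv)]
  have h2 : (2 * ((2 * (v:ℝ))⁻¹))⁻¹ = (v:ℝ) := by
    field_simp
  have h3 : π / (2 * (v:ℝ))⁻¹ = 2 * π * v := by
    field_simp
  rw [h2, h3]
  have h4 : Real.sqrt (2 * π * v) ≠ 0 := by
    refine ne_of_gt (Real.sqrt_pos.mpr ?_)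
    positivity
  field_simp

end GaussAux
lemma my_abs_le_sq_add_one (x : ℝ) : |x| ≤ (x ^ 2 + 1) / 2 := by
  nlinarith [sq_nonneg (|x| - 1), abs_nonneg x, sq_abs x]

lemma my_integrable_of_sq {Ω : Type*} [MeasurableSpace Ω] {P : Measure Ω}
    [IsProbabilityMeasure P] {f : Ω → ℝ} (hmeas : AEStronglyMeasurable f P)
    (h2 : Integrable (fun ω => f ω ^ 2) P) : Integrable f P := by
  refine Integrable.mono' (((h2.add (integrable_const 1)).div_const 2)) hmeas ?_
  filter_upwards with ω
  simpa using my_abs_le_sq_add_one (f ω)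

lemma my_quad {a I J : ℝ} (ha : 0 < a)
    (key : 0 ≤ J - 2 * (I / a) * I + (I / a) ^ 2 * a) : I ^ 2 ≤ a * J := by
  have h1 : 2 * (I / a) * I = 2 * I ^ 2 / a := by ring
  have h2 : (I / a) ^ 2 * a = I ^ 2 / a := by field_simp
  rw [h1, h2] at key
  have h3 : 2 * I ^ 2 / a = 2 * (I ^ 2 / a) := by ring
  rw [h3] at key
  have hk : I ^ 2 / a ≤ J := by linarith
  calc I ^ 2 = a * (I ^ 2 / a) := by field_simp
    _ ≤ a * J := mul_le_mul_of_nonneg_left hk ha.le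

lemma my_cs_indicator {Ω : Type*} [MeasurableSpace Ω] (P : Measure Ω)
    [IsProbabilityMeasure P] {A : Set Ω} (hA : MeasurableSet A) {f : Ω → ℝ}
    (hf : Integrable f P) (hf2 : Integrable (fun ω => f ω ^ 2) P) :
    (∫ ω, A.indicator f ω ∂P) ^ 2 ≤ (P A).toReal * ∫ ω, f ω ^ 2 ∂P := by
  have hind2 : Integrable (A.indicator fun ω => f ω ^ 2) P := hf2.indicator hA
  have hind1 : Integrable (A.indicator f) P := hf.indicator hA
  have hindc : Integrable (A.indicator fun _ : Ω => (1:ℝ)) P := (integrable_const 1).indicator hA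
  have hic : ∫ ω, A.indicator (fun _ => (1:ℝ)) ω ∂P = (P A).toReal := by
    rw [integral_indicator_const (1:ℝ) hA]; simp; rfl
  have key : ∀ t : ℝ, 0 ≤ (∫ ω, A.indicator (fun ω => f ω ^ 2) ω ∂P)
      - 2 * t * (∫ ω, A.indicator f ω ∂P) + t ^ 2 * (P A).toReal := by
    intro t
    have hsplit : ∫ ω, (A.indicator (fun ω => f ω ^ 2) ω - 2 * t * A.indicator f ω
          + t ^ 2 * A.indicator (fun _ => (1:ℝ)) ω) ∂P
        = (∫ ω, A.indicator (fun ω => f ω ^ 2) ω ∂P)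
          - 2 * t * (∫ ω, A.indicator f ω ∂P) + t ^ 2 * (P A).toReal := by
      have hsub : Integrable (fun ω => A.indicator (fun ω => f ω ^ 2) ω
          - 2 * t * A.indicator f ω) P := hind2.sub (hind1.const_mul (2*t))
      have hc2 : Integrable (fun ω => t ^ 2 * A.indicator (fun _ => (1:ℝ)) ω) P :=
        hindc.const_mul (t^2)
      have hm : Integrable (fun ω => 2 * t * A.indicator f ω) P := hind1.const_mul (2*t)
      rw [integral_add hsub hc2, integral_sub hind2 hm, integral_const_mul,
        integral_const_mul, hic]
    have h0 : 0 ≤ ∫ ω, (A.indicator (fun ω => f ω ^ 2) ω - 2 * t * A.indicator f ω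
        + t ^ 2 * A.indicator (fun _ => (1:ℝ)) ω) ∂P := by
      refine integral_nonneg fun ω => ?_
      have h1 := Set.indicator_nonneg (s := A) (f := fun ω => (f ω - t) ^ 2)
        (fun _ _ => sq_nonneg _) ω
      calc (0:ℝ) ≤ A.indicator (fun ω => (f ω - t) ^ 2) ω := h1
        _ = _ := by
          by_cases hω : ω ∈ A
          · simp only [Set.indicator_of_mem hω]; ring
          · simp only [Set.indicator_of_notMem hω]; ring
    rw [hsplit] at h0
    exact h0
  have hindle : ∫ ω, A.indicator (fun ω => f ω ^ 2) ω ∂P ≤ ∫ ω, f ω ^ 2 ∂P := by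
    refine integral_mono hind2 hf2 ?_
    intro ω
    exact Set.indicator_le_self' (fun _ _ => sq_nonneg _) ω
  rcases eq_or_lt_of_le (ENNReal.toReal_nonneg : (0:ℝ) ≤ (P A).toReal) with hza | hza
  · have hPA : P A = 0 :=
      ((ENNReal.toReal_eq_zero_iff _).mp hza.symm).resolve_right (measure_ne_top P A)
    have hI0 : ∫ ω, A.indicator f ω ∂P = 0 := by
      rw [integral_indicator hA, Measure.restrict_eq_zero.mpr hPA]
      simp
    rw [hI0, ← hza]
    simp
  · refine (my_quad hza (key ((∫ ω, A.indicator f ω ∂P) / (P A).toReal))).trans ?_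
    exact mul_le_mul_of_nonneg_left hindle ENNReal.toReal_nonneg

lemma my_sum_castLE {p s : ℕ} (hsp : s ≤ p) (f : Fin p → ℝ)
    (hf : ∀ j : Fin p, s ≤ (j : ℕ) → f j = 0) :
    ∑ j, f j = ∑ k : Fin s, f (Fin.castLE hsp k) := by
  classical
  rw [← Finset.sum_image (g := Fin.castLE hsp) (f := f)
    (fun x _ y _ h => Fin.castLE_injective hsp h)]
  refine (Finset.sum_subset (Finset.subset_univ _) ?_).symm
  intro j _ hj
  refine hf j ?_
  by_contra h
  push_neg at h
  exact hj (Finset.mem_image.mpr ⟨⟨(j:ℕ), h⟩, Finset.mem_univ _, by ext; simp⟩)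

end AuxLemmas

/-- In the fixed-design Gaussian linear model `Y = Xβ* + ε` with
`β*` supported on `S = {1,…,s}`, a model-selection procedure `Ŝ` and a Select+mLS
estimator `β̃` with threshold `τ > 0`, the squared bias satisfies
`‖E[β̃(Y)] − β*‖₂² ≤ 2·P(Ŝ ≠ S)·[(σ²/n)·tr(C₁₁⁻¹) + ‖β*‖₂² + (1/τ²)(1/n)‖Xβ*‖₂² + σ²/τ²]`. -/
theorem selectMLS_bias_sq_le
    {Ω : Type*} [MeasurableSpace Ω] (P : Measure Ω) [IsProbabilityMeasure P]
    {n p s : ℕ} (hs : 0 < s) (hsn : s < n) (hsp : s ≤ p)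
    -- design matrix and true coefficients, supported on the first `s` coordinates
    (X : Matrix (Fin n) (Fin p) ℝ) (βstar : Fin p → ℝ)
    (hsupp : ∀ j : Fin p, s ≤ (j : ℕ) → βstar j = 0)
    -- the submatrix of the columns indexed by `S`, of full column rank
    (XS : Matrix (Fin n) (Fin s) ℝ) (hXS : ∀ i k, XS i k = X i (Fin.castLE hsp k))
    (hrank : (XSᵀ * XS).PosDef)
    -- i.i.d. `N(0,σ²)` errors
    (σ : ℝ) (hσ : 0 < σ) (ε : Ω → Fin n → ℝ)
    (hεmeas : ∀ i, Measurable fun ω => ε ω i)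
    (hindep : iIndepFun (fun i ω => ε ω i) P)
    (hgauss : ∀ i, P.map (fun ω => ε ω i) = gaussianReal 0 ⟨σ ^ 2, sq_nonneg σ⟩)
    -- response
    (Y : Ω → Fin n → ℝ) (hY : ∀ ω, Y ω = X *ᵥ βstar + ε ω)
    -- model-selection procedure
    (Shat : (Fin n → ℝ) → Set (Fin p)) (hShat : Measurable Shat)
    -- Select+mLS estimator with threshold `τ`
    (τ : ℝ) (hτ : 0 < τ)
    (βtilde : (Fin n → ℝ) → Fin p → ℝ) (hβmeas : Measurable βtilde)
    (hbound : ∀ y : Fin n → ℝ,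
      ∑ j, (βtilde y j) ^ 2 ≤ (∑ i, (y i) ^ 2) / (n * τ ^ 2))
    (hmLS : ∀ y : Fin n → ℝ, Shat y = {j : Fin p | (j : ℕ) < s} →
      (∀ k : Fin s, βtilde y (Fin.castLE hsp k) = ((XSᵀ * XS)⁻¹ *ᵥ (XSᵀ *ᵥ y)) k) ∧
      (∀ j : Fin p, s ≤ (j : ℕ) → βtilde y j = 0)) :
    ∑ j, ((∫ ω, βtilde (Y ω) j ∂P) - βstar j) ^ 2
      ≤ 2 * (P {ω | Shat (Y ω) ≠ {j : Fin p | (j : ℕ) < s}}).toReal *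
        ((σ ^ 2 / n) * Matrix.trace (((1 / (n : ℝ)) • (XSᵀ * XS))⁻¹)
          + ∑ j, (βstar j) ^ 2
          + (1 / τ ^ 2) * ((1 / (n : ℝ)) * ∑ i, ((X *ᵥ βstar) i) ^ 2)
          + σ ^ 2 / τ ^ 2) := by
  classical
  have hn0 : (n : ℝ) ≠ 0 := Nat.cast_ne_zero.mpr (hs.trans hsn).ne'
  have hτ0 : τ ^ 2 ≠ 0 := pow_ne_zero 2 hτ.ne'
  have hvpos : (0:ℝ) < ((⟨σ ^ 2, sq_nonneg σ⟩ : NNReal) : ℝ) := by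
    simpa using pow_pos hσ 2
  -- basic facts about the errors
  have hεae : ∀ i, AEMeasurable (fun ω => ε ω i) P := fun i => (hεmeas i).aemeasurable
  have int_ε : ∀ i, Integrable (fun ω => ε ω i) P := by
    intro i
    have h : Integrable (fun x : ℝ => x) (P.map (fun ω => ε ω i)) := by
      rw [hgauss i]; exact my_gauss_integrable_id hvpos
    exact (integrable_map_measure aestronglyMeasurable_id (hεae i)).mp h
  have Eε : ∀ i, ∫ ω, ε ω i ∂P = 0 := by
    intro i
    have h := integral_map (hεae i) (f := fun x : ℝ => x) aestronglyMeasurable_id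
    rw [hgauss i, my_gauss_integral_id hvpos] at h
    exact h.symm
  have int_ε2 : ∀ i, Integrable (fun ω => ε ω i ^ 2) P := by
    intro i
    have h : Integrable (fun x : ℝ => x ^ 2) (P.map (fun ω => ε ω i)) := by
      rw [hgauss i]; exact my_gauss_integrable_sq hvpos
    exact (integrable_map_measure ((measurable_id.pow_const 2).aestronglyMeasurable)
      (hεae i)).mp h
  have Eε2 : ∀ i, ∫ ω, ε ω i ^ 2 ∂P = σ ^ 2 := by
    intro i
    have h := integral_map (hεae i) (f := fun x : ℝ => x ^ 2)
      ((measurable_id.pow_const 2).aestronglyMeasurable)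
    rw [hgauss i, my_gauss_integral_sq hvpos] at h
    exact h.symm
  have int_cross : ∀ i i', i ≠ i' → Integrable (fun ω => ε ω i * ε ω i') P := by
    intro i i' h
    exact (hindep.indepFun h).integrable_mul (int_ε i) (int_ε i')
  have E_cross : ∀ i i', i ≠ i' → ∫ ω, ε ω i * ε ω i' ∂P = 0 := by
    intro i i' h
    have h2 := (hindep.indepFun h).integral_fun_mul_eq_mul_integral (int_ε i).1 (int_ε i').1
    simpa [Pi.mul_apply, Eε i, Eε i'] using h2
  -- measurability of Y and of the exceptional event
  have hεm : Measurable ε := measurable_pi_lambda ε hεmeas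
  have hYmeas : Measurable Y := by
    have h : Y = fun ω => X *ᵥ βstar + ε ω := funext hY
    rw [h]
    exact measurable_pi_lambda _ (fun i => ((hεmeas i).const_add ((X *ᵥ βstar) i)))
  set Sset : Set (Fin p) := {j : Fin p | (j:ℕ) < s} with hSset
  set A : Set Ω := {ω | Shat (Y ω) ≠ Sset} with hAdef
  have hAmeas : MeasurableSet A :=
    hYmeas ((hShat (measurableSet_singleton Sset)).compl)
  -- matrix facts
  have hdet : IsUnit (XSᵀ * XS).det := isUnit_iff_ne_zero.mpr (ne_of_gt hrank.det_pos)
  have hGinv : (XSᵀ * XS)⁻¹ * (XSᵀ * XS) = 1 := Matrix.nonsing_inv_mul _ hdet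
  have hGT : (XSᵀ * XS)ᵀ = XSᵀ * XS := by
    rw [Matrix.transpose_mul, Matrix.transpose_transpose]
  set M : Matrix (Fin s) (Fin n) ℝ := (XSᵀ * XS)⁻¹ * XSᵀ with hMdef
  have hMT : Mᵀ = XS * (XSᵀ * XS)⁻¹ := by
    rw [hMdef, Matrix.transpose_mul, Matrix.transpose_transpose,
      Matrix.transpose_nonsing_inv, hGT]
  have hMM : M * Mᵀ = (XSᵀ * XS)⁻¹ := by
    rw [hMT, hMdef]
    calc (XSᵀ * XS)⁻¹ * XSᵀ * (XS * (XSᵀ * XS)⁻¹)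
        = (XSᵀ * XS)⁻¹ * (XSᵀ * XS) * (XSᵀ * XS)⁻¹ := by
          rw [Matrix.mul_assoc, Matrix.mul_assoc, Matrix.mul_assoc]
      _ = (XSᵀ * XS)⁻¹ := by rw [hGinv, Matrix.one_mul]
  have htr : Matrix.trace (((1 / (n : ℝ)) • (XSᵀ * XS))⁻¹)
      = (n : ℝ) * Matrix.trace ((XSᵀ * XS)⁻¹) := by
    have hinv : ((1 / (n : ℝ)) • (XSᵀ * XS))⁻¹ = (n : ℝ) • (XSᵀ * XS)⁻¹ := by
      apply Matrix.inv_eq_right_inv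
      rw [Matrix.smul_mul, Matrix.mul_smul, Matrix.mul_nonsing_inv _ hdet, smul_smul]
      rw [show (1 / (n:ℝ)) * (n:ℝ) = 1 by field_simp]
      simp
    rw [hinv, Matrix.trace_smul, smul_eq_mul]
  -- the true mean as a vector in the column span of XS
  set βS : Fin s → ℝ := fun k => βstar (Fin.castLE hsp k) with hβS
  have hμvec : X *ᵥ βstar = XS *ᵥ βS := by
    funext i
    simp only [Matrix.mulVec, dotProduct]
    rw [my_sum_castLE hsp (fun j => X i j * βstar j)
      (fun j hj => by simp [hsupp j hj])]
    exact Finset.sum_congr rfl fun k _ => by rw [hXS]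
  -- the oracle least squares estimator
  set βhat : Ω → Fin p → ℝ :=
    fun ω j => βstar j + (if h : (j:ℕ) < s then (M *ᵥ ε ω) ⟨(j:ℕ), h⟩ else 0) with hβhat
  have hols : ∀ ω, (XSᵀ * XS)⁻¹ *ᵥ (XSᵀ *ᵥ Y ω) = βS + M *ᵥ ε ω := by
    intro ω
    rw [hY ω, hμvec, Matrix.mulVec_add, Matrix.mulVec_add, Matrix.mulVec_mulVec,
      Matrix.mulVec_mulVec, Matrix.mulVec_mulVec,
      Matrix.mul_assoc ((XSᵀ * XS)⁻¹) XSᵀ XS, hGinv, Matrix.one_mulVec]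
  have hagree : ∀ ω, Shat (Y ω) = Sset → ∀ j, βtilde (Y ω) j = βhat ω j := by
    intro ω hω j
    obtain ⟨h1, h2⟩ := hmLS (Y ω) hω
    by_cases hj : (j:ℕ) < s
    · have hjc : j = Fin.castLE hsp ⟨(j:ℕ), hj⟩ := by ext; simp
      rw [hjc, h1 ⟨(j:ℕ), hj⟩, hols ω]
      simp [hβhat, hβS]
      intro h; omega
    · rw [h2 j (Nat.le_of_not_lt hj)]
      simp [hβhat, hsupp j (Nat.le_of_not_lt hj), hj]
  -- moments of the linear noise term
  have hLeq : ∀ (k : Fin s) ω, (M *ᵥ ε ω) k = ∑ i, M k i * ε ω i := by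
    intro k ω; simp [Matrix.mulVec, dotProduct]
  have int_L : ∀ k : Fin s, Integrable (fun ω => (M *ᵥ ε ω) k) P := by
    intro k
    have h : Integrable (fun ω => ∑ i, M k i * ε ω i) P :=
      integrable_finset_sum _ (fun i _ => (int_ε i).const_mul _)
    exact h.congr (ae_of_all _ fun ω => (hLeq k ω).symm)
  have EL : ∀ k : Fin s, ∫ ω, (M *ᵥ ε ω) k ∂P = 0 := by
    intro k
    calc ∫ ω, (M *ᵥ ε ω) k ∂P = ∫ ω, ∑ i, M k i * ε ω i ∂P :=
          integral_congr_ae (ae_of_all _ fun ω => hLeq k ω)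
      _ = ∑ i, ∫ ω, M k i * ε ω i ∂P :=
          integral_finset_sum _ (fun i _ => (int_ε i).const_mul _)
      _ = 0 := by simp [integral_const_mul, Eε]
  have hsqL : ∀ (k : Fin s) ω, ((M *ᵥ ε ω) k) ^ 2
      = ∑ i, ∑ i', (M k i * M k i') * (ε ω i * ε ω i') := by
    intro k ω
    rw [hLeq, sq, Finset.sum_mul_sum]
    exact Finset.sum_congr rfl fun i _ => Finset.sum_congr rfl fun i' _ => by ring
  have int_term : ∀ (k : Fin s) (i i' : Fin n),
      Integrable (fun ω => (M k i * M k i') * (ε ω i * ε ω i')) P := by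
    intro k i i'
    by_cases h : i = i'
    · subst h
      exact ((int_ε2 i).const_mul (M k i * M k i)).congr (ae_of_all _ fun ω => by ring)
    · exact (int_cross i i' h).const_mul _
  have int_L2 : ∀ k : Fin s, Integrable (fun ω => ((M *ᵥ ε ω) k) ^ 2) P := by
    intro k
    exact (integrable_finset_sum _ fun i _ => integrable_finset_sum _
      fun i' _ => int_term k i i').congr (ae_of_all _ fun ω => (hsqL k ω).symm)
  have EL2 : ∀ k : Fin s, ∫ ω, ((M *ᵥ ε ω) k) ^ 2 ∂P = σ ^ 2 * ∑ i, (M k i) ^ 2 := by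
    intro k
    calc ∫ ω, ((M *ᵥ ε ω) k) ^ 2 ∂P
        = ∫ ω, ∑ i, ∑ i', (M k i * M k i') * (ε ω i * ε ω i') ∂P :=
          integral_congr_ae (ae_of_all _ fun ω => hsqL k ω)
      _ = ∑ i, ∑ i', ∫ ω, (M k i * M k i') * (ε ω i * ε ω i') ∂P := by
          rw [integral_finset_sum _ (fun i _ => integrable_finset_sum _
            fun i' _ => int_term k i i')]
          exact Finset.sum_congr rfl fun i _ =>
            integral_finset_sum _ (fun i' _ => int_term k i i')
      _ = ∑ i, ∑ i', (M k i * M k i') * ∫ ω, ε ω i * ε ω i' ∂P := by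
          exact Finset.sum_congr rfl fun i _ => Finset.sum_congr rfl fun i' _ =>
            integral_const_mul _ _
      _ = ∑ i, (M k i) ^ 2 * σ ^ 2 := by
          refine Finset.sum_congr rfl fun i _ => ?_
          rw [Finset.sum_eq_single i]
          · have hsq : (fun ω => ε ω i * ε ω i) = fun ω => ε ω i ^ 2 :=
              funext fun ω => (sq (ε ω i)).symm
            rw [hsq, Eε2 i]; ring
          · intro i' _ hne
            rw [E_cross i i' (Ne.symm hne), mul_zero]
          · intro h; exact absurd (Finset.mem_univ i) h
      _ = σ ^ 2 * ∑ i, (M k i) ^ 2 := by rw [Finset.mul_sum]; exact Finset.sum_congr rfl fun i _ => by ring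
  -- integrability and moments of the oracle estimator
  have int_βhat : ∀ j, Integrable (fun ω => βhat ω j) P := by
    intro j
    by_cases hj : (j:ℕ) < s
    · have h : Integrable (fun ω => βstar j + (M *ᵥ ε ω) ⟨(j:ℕ), hj⟩) P :=
        (integrable_const (βstar j)).add (int_L ⟨(j:ℕ), hj⟩)
      exact h.congr (ae_of_all _ fun ω => by simp [hβhat, dif_pos hj])
    · exact (integrable_const (βstar j)).congr (ae_of_all _ fun ω => by simp [hβhat, dif_neg hj])
  have E_βhat : ∀ j, ∫ ω, βhat ω j ∂P = βstar j := by
    intro j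
    by_cases hj : (j:ℕ) < s
    · have h : ∫ ω, βhat ω j ∂P = ∫ ω, βstar j + (M *ᵥ ε ω) ⟨(j:ℕ), hj⟩ ∂P :=
        integral_congr_ae (ae_of_all _ fun ω => by simp [hβhat, dif_pos hj])
      rw [h, integral_add (integrable_const _) (int_L ⟨(j:ℕ), hj⟩), EL, integral_const]
      simp
    · have h : ∫ ω, βhat ω j ∂P = ∫ ω, (βstar j : ℝ) ∂P :=
        integral_congr_ae (ae_of_all _ fun ω => by simp [hβhat, dif_neg hj])
      rw [h, integral_const]; simp
  have int_βhat2 : ∀ j, Integrable (fun ω => βhat ω j ^ 2) P := by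
    intro j
    by_cases hj : (j:ℕ) < s
    · have h : Integrable (fun ω => βstar j ^ 2
          + 2 * βstar j * (M *ᵥ ε ω) ⟨(j:ℕ), hj⟩ + ((M *ᵥ ε ω) ⟨(j:ℕ), hj⟩) ^ 2) P :=
        ((integrable_const _).add ((int_L ⟨(j:ℕ), hj⟩).const_mul (2 * βstar j))).add (int_L2 ⟨(j:ℕ), hj⟩)
      exact h.congr (ae_of_all _ fun ω => by simp [hβhat, dif_pos hj]; ring)
    · exact (integrable_const (βstar j ^ 2)).congr
        (ae_of_all _ fun ω => by simp [hβhat, dif_neg hj])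
  have E_βhat2 : ∀ j, ∫ ω, βhat ω j ^ 2 ∂P
      = βstar j ^ 2 + (if h : (j:ℕ) < s then σ ^ 2 * ∑ i, (M ⟨(j:ℕ), h⟩ i) ^ 2 else 0) := by
    intro j
    by_cases hj : (j:ℕ) < s
    · rw [dif_pos hj]
      have h : ∫ ω, βhat ω j ^ 2 ∂P = ∫ ω, (βstar j ^ 2
          + 2 * βstar j * (M *ᵥ ε ω) ⟨(j:ℕ), hj⟩ + ((M *ᵥ ε ω) ⟨(j:ℕ), hj⟩) ^ 2) ∂P :=
        integral_congr_ae (ae_of_all _ fun ω => by simp [hβhat, dif_pos hj]; ring)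
      have hi1 : Integrable (fun ω => βstar j ^ 2
          + 2 * βstar j * (M *ᵥ ε ω) ⟨(j:ℕ), hj⟩) P :=
        (integrable_const _).add ((int_L ⟨(j:ℕ), hj⟩).const_mul (2 * βstar j))
      rw [h, integral_add hi1 (int_L2 ⟨(j:ℕ), hj⟩), integral_add (integrable_const _)
        ((int_L ⟨(j:ℕ), hj⟩).const_mul (2 * βstar j)), integral_const_mul, EL, EL2,
        integral_const]
      simp
    · rw [dif_neg hj]
      have h : ∫ ω, βhat ω j ^ 2 ∂P = ∫ ω, (βstar j ^ 2 : ℝ) ∂P :=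
        integral_congr_ae (ae_of_all _ fun ω => by simp [hβhat, dif_neg hj])
      rw [h, integral_const]; simp
  -- integrability of the estimator
  have hbtmeas : ∀ j, Measurable (fun ω => βtilde (Y ω) j) :=
    fun j => (measurable_pi_apply j).comp (hβmeas.comp hYmeas)
  have int_Y2 : ∀ i, Integrable (fun ω => (Y ω i) ^ 2) P := by
    intro i
    have h : Integrable (fun ω => (X *ᵥ βstar) i ^ 2
        + 2 * (X *ᵥ βstar) i * ε ω i + ε ω i ^ 2) P :=
      ((integrable_const _).add ((int_ε i).const_mul _)).add (int_ε2 i)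
    exact h.congr (ae_of_all _ fun ω => by simp only [hY, Pi.add_apply]; ring)
  have E_Y2 : ∀ i, ∫ ω, (Y ω i) ^ 2 ∂P = (X *ᵥ βstar) i ^ 2 + σ ^ 2 := by
    intro i
    have h : ∫ ω, (Y ω i) ^ 2 ∂P = ∫ ω, ((X *ᵥ βstar) i ^ 2
        + 2 * (X *ᵥ βstar) i * ε ω i + ε ω i ^ 2) ∂P :=
      integral_congr_ae (ae_of_all _ fun ω => by simp only [hY, Pi.add_apply]; ring)
    have hi1 : Integrable (fun ω => (X *ᵥ βstar) i ^ 2 + 2 * (X *ᵥ βstar) i * ε ω i) P :=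
      (integrable_const _).add ((int_ε i).const_mul _)
    rw [h, integral_add hi1 (int_ε2 i), integral_add (integrable_const _)
      ((int_ε i).const_mul _), integral_const_mul, Eε, Eε2, integral_const]
    simp
  set g : Ω → ℝ := fun ω => (∑ i, (Y ω i) ^ 2) / (n * τ ^ 2) with hgdef
  have int_g : Integrable g P := (integrable_finset_sum _ fun i _ => int_Y2 i).div_const _
  have E_g : ∫ ω, g ω ∂P = ((∑ i, (X *ᵥ βstar) i ^ 2) + n * σ ^ 2) / (n * τ ^ 2) := by
    rw [hgdef]
    rw [integral_div, integral_finset_sum _ (fun i _ => int_Y2 i)]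
    congr 1
    rw [Finset.sum_congr rfl (fun i _ => E_Y2 i), Finset.sum_add_distrib,
      Finset.sum_const, Finset.card_univ, Fintype.card_fin, nsmul_eq_mul]
  have int_bt2 : ∀ j, Integrable (fun ω => βtilde (Y ω) j ^ 2) P := by
    intro j
    refine Integrable.mono' int_g ((hbtmeas j).pow_const 2).aestronglyMeasurable
      (ae_of_all _ fun ω => ?_)
    rw [Real.norm_eq_abs, abs_of_nonneg (sq_nonneg _)]
    refine le_trans (Finset.single_le_sum (f := fun j' => βtilde (Y ω) j' ^ 2)
      (fun j' _ => sq_nonneg _) (Finset.mem_univ j)) ?_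
    exact hbound (Y ω)
  have int_bt : ∀ j, Integrable (fun ω => βtilde (Y ω) j) P :=
    fun j => my_integrable_of_sq (hbtmeas j).aestronglyMeasurable (int_bt2 j)
  -- the deviation from the oracle estimator
  have int_D : ∀ j, Integrable (fun ω => βtilde (Y ω) j - βhat ω j) P :=
    fun j => (int_bt j).sub (int_βhat j)
  have int_D2 : ∀ j, Integrable (fun ω => (βtilde (Y ω) j - βhat ω j) ^ 2) P := by
    intro j
    have hD2meas : AEStronglyMeasurable (fun ω => (βtilde (Y ω) j - βhat ω j) ^ 2) P := by
      have h := ((int_bt j).1.sub (int_βhat j).1).mul ((int_bt j).1.sub (int_βhat j).1)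
      exact h.congr (ae_of_all _ fun ω => by simp [Pi.sub_apply]; ring)
    refine Integrable.mono' (((int_bt2 j).const_mul 2).add ((int_βhat2 j).const_mul 2))
      hD2meas (ae_of_all _ fun ω => ?_)
    rw [Real.norm_eq_abs, abs_of_nonneg (sq_nonneg _)]
    simp only [Pi.add_apply]
    nlinarith [sq_nonneg (βtilde (Y ω) j + βhat ω j)]
  -- the deviation vanishes off the exceptional event
  have hDind : ∀ j, (fun ω => βtilde (Y ω) j - βhat ω j)
      = A.indicator (fun ω => βtilde (Y ω) j - βhat ω j) := by
    intro j; funext ω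
    by_cases hω : ω ∈ A
    · rw [Set.indicator_of_mem hω]
    · rw [Set.indicator_of_notMem hω]
      have heq : Shat (Y ω) = Sset := of_not_not hω
      rw [hagree ω heq j, sub_self]
  have hbias : ∀ j, (∫ ω, βtilde (Y ω) j ∂P) - βstar j
      = ∫ ω, A.indicator (fun ω => βtilde (Y ω) j - βhat ω j) ω ∂P := by
    intro j
    rw [← hDind j, integral_sub (int_bt j) (int_βhat j), E_βhat j]
  -- Cauchy–Schwarz coordinatewise
  have hstep1 : ∑ j, ((∫ ω, βtilde (Y ω) j ∂P) - βstar j) ^ 2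
      ≤ (P A).toReal * ∑ j, ∫ ω, (βtilde (Y ω) j - βhat ω j) ^ 2 ∂P := by
    rw [Finset.mul_sum]
    refine Finset.sum_le_sum fun j _ => ?_
    rw [hbias j]
    exact my_cs_indicator P hAmeas (int_D j) (int_D2 j)
  have hsum_int : ∑ j, ∫ ω, (βtilde (Y ω) j - βhat ω j) ^ 2 ∂P
      = ∫ ω, ∑ j, (βtilde (Y ω) j - βhat ω j) ^ 2 ∂P :=
    (integral_finset_sum _ (fun j _ => int_D2 j)).symm
  have int_sum_bt2 : Integrable (fun ω => ∑ j, βtilde (Y ω) j ^ 2) P :=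
    integrable_finset_sum _ (fun j _ => int_bt2 j)
  have int_sum_bh2 : Integrable (fun ω => ∑ j, βhat ω j ^ 2) P :=
    integrable_finset_sum _ (fun j _ => int_βhat2 j)
  have hintD2sum : ∫ ω, ∑ j, (βtilde (Y ω) j - βhat ω j) ^ 2 ∂P
      ≤ 2 * (∫ ω, ∑ j, βtilde (Y ω) j ^ 2 ∂P) + 2 * ∫ ω, ∑ j, βhat ω j ^ 2 ∂P := by
    have hptws : ∀ ω, ∑ j, (βtilde (Y ω) j - βhat ω j) ^ 2
        ≤ 2 * (∑ j, βtilde (Y ω) j ^ 2) + 2 * ∑ j, βhat ω j ^ 2 := by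
      intro ω
      rw [Finset.mul_sum, Finset.mul_sum, ← Finset.sum_add_distrib]
      refine Finset.sum_le_sum fun j _ => ?_
      nlinarith [sq_nonneg (βtilde (Y ω) j + βhat ω j)]
    have hmono := integral_mono (integrable_finset_sum _ fun j _ => int_D2 j)
      ((int_sum_bt2.const_mul 2).add (int_sum_bh2.const_mul 2)) hptws
    calc ∫ ω, ∑ j, (βtilde (Y ω) j - βhat ω j) ^ 2 ∂P
        ≤ ∫ ω, (2 * (∑ j, βtilde (Y ω) j ^ 2) + 2 * ∑ j, βhat ω j ^ 2) ∂P := hmono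
      _ = 2 * (∫ ω, ∑ j, βtilde (Y ω) j ^ 2 ∂P) + 2 * ∫ ω, ∑ j, βhat ω j ^ 2 ∂P := by
          rw [integral_add (int_sum_bt2.const_mul 2) (int_sum_bh2.const_mul 2),
            integral_const_mul, integral_const_mul]
  have hT1 : ∫ ω, ∑ j, βtilde (Y ω) j ^ 2 ∂P
      ≤ ((∑ i, (X *ᵥ βstar) i ^ 2) + n * σ ^ 2) / (n * τ ^ 2) := by
    rw [← E_g]
    exact integral_mono int_sum_bt2 int_g (fun ω => hbound (Y ω))
  have hT2 : ∫ ω, ∑ j, βhat ω j ^ 2 ∂P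
      = (∑ j, βstar j ^ 2) + σ ^ 2 * Matrix.trace ((XSᵀ * XS)⁻¹) := by
    rw [integral_finset_sum _ (fun j _ => int_βhat2 j),
      Finset.sum_congr rfl (fun j _ => E_βhat2 j), Finset.sum_add_distrib]
    congr 1
    rw [my_sum_castLE hsp _ (fun j hj => dif_neg (Nat.not_lt.mpr hj))]
    have hterm : ∀ k : Fin s, (if h : ((Fin.castLE hsp k : Fin p) : ℕ) < s
        then σ ^ 2 * ∑ i, (M ⟨((Fin.castLE hsp k : Fin p) : ℕ), h⟩ i) ^ 2 else 0)
        = σ ^ 2 * ∑ i, (M k i) ^ 2 := by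
      intro k
      simp only [Fin.coe_castLE, Fin.eta]
      rw [dif_pos k.isLt]
    rw [Finset.sum_congr rfl (fun k _ => hterm k), ← Finset.mul_sum]
    congr 1
    rw [← hMM]
    simp [Matrix.trace, Matrix.diag, Matrix.mul_apply, Matrix.transpose_apply, sq]
  calc ∑ j, ((∫ ω, βtilde (Y ω) j ∂P) - βstar j) ^ 2
      ≤ (P A).toReal * ∑ j, ∫ ω, (βtilde (Y ω) j - βhat ω j) ^ 2 ∂P := hstep1
    _ = (P A).toReal * ∫ ω, ∑ j, (βtilde (Y ω) j - βhat ω j) ^ 2 ∂P := by rw [hsum_int]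
    _ ≤ (P A).toReal * (2 * (((∑ i, (X *ᵥ βstar) i ^ 2) + n * σ ^ 2) / (n * τ ^ 2))
          + 2 * ((∑ j, βstar j ^ 2) + σ ^ 2 * Matrix.trace ((XSᵀ * XS)⁻¹))) := by
        refine mul_le_mul_of_nonneg_left ?_ ENNReal.toReal_nonneg
        refine hintD2sum.trans ?_
        linarith [hT1, hT2.le, hT2.ge]
    _ = 2 * (P A).toReal *
        ((σ ^ 2 / n) * Matrix.trace (((1 / (n : ℝ)) • (XSᵀ * XS))⁻¹)
          + ∑ j, (βstar j) ^ 2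
          + (1 / τ ^ 2) * ((1 / (n : ℝ)) * ∑ i, ((X *ᵥ βstar) i) ^ 2)
          + σ ^ 2 / τ ^ 2) := by
        rw [htr]
        field_simp
        ring
end

section
/- Under the fixed-design Gaussian linear model with a model-selection procedure Ŝ, the Select+Ridge estimator β̃ with parameter μ > 0, and smallest eigenvalue of C₁₁ at least Λ_min > 0, the squared bias satisfies ‖E[β̃(Y)] − β*‖₂² ≤ (2μ²/(n²Λ_min²))·‖β*‖₂² + 2·P(Ŝ ≠ S)·(n/μ)·[ (1/n)‖Xβ*‖₂² + σ² ]. -/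
open Matrix MeasureTheory ProbabilityTheory

section Aux
open Real
open scoped NNReal ENNReal

lemma aux_integral_id_mul_exp {b : ℝ} (hb : 0 < b) :
    ∫ x : ℝ, x * rexp (-b * x ^ 2) = 0 := by
  have hderiv : ∀ x : ℝ, HasDerivAt (fun x : ℝ => -(2*b)⁻¹ * rexp (-b * x ^ 2))
      (x * rexp (-b * x ^ 2)) x := by
    intro x
    have h1 : HasDerivAt (fun x : ℝ => -b * x ^ 2) (-b * (2 * x)) x := by
      simpa using ((hasDerivAt_pow 2 x).const_mul (-b))
    have h2 := (h1.exp).const_mul (-(2*b)⁻¹)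
    refine h2.congr_deriv ?_
    field_simp
  have := MeasureTheory.integral_eq_zero_of_hasDerivAt_of_integrable hderiv
    (integrable_mul_exp_neg_mul_sq hb)
    (((integrable_exp_neg_mul_sq hb).const_mul _))
  simpa using this

lemma aux_integral_sq_mul_exp {b : ℝ} (hb : 0 < b) :
    ∫ x : ℝ, x ^ 2 * rexp (-b * x ^ 2) = (2*b)⁻¹ * ∫ x : ℝ, rexp (-b * x ^ 2) := by
  have hderiv : ∀ x : ℝ, HasDerivAt (fun x : ℝ => x * rexp (-b * x ^ 2))
      (rexp (-b * x ^ 2) - 2 * b * (x ^ 2 * rexp (-b * x ^ 2))) x := by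
    intro x
    have h1 : HasDerivAt (fun x : ℝ => -b * x ^ 2) (-b * (2 * x)) x := by
      simpa using ((hasDerivAt_pow 2 x).const_mul (-b))
    have h2 := (hasDerivAt_id x).mul h1.exp
    refine h2.congr_deriv ?_
    simp only [id_eq]
    ring
  have hint2 : Integrable (fun x : ℝ => x ^ 2 * rexp (-b * x ^ 2)) := by
    have := integrable_rpow_mul_exp_neg_mul_sq hb (s := 2) (by norm_num)
    simpa [Real.rpow_natCast] using this
  have hint : Integrable (fun x : ℝ => rexp (-b * x ^ 2) - 2 * b * (x ^ 2 * rexp (-b * x ^ 2))) :=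
    (integrable_exp_neg_mul_sq hb).sub (hint2.const_mul _)
  have hz := MeasureTheory.integral_eq_zero_of_hasDerivAt_of_integrable hderiv hint
    (integrable_mul_exp_neg_mul_sq hb)
  rw [integral_sub (integrable_exp_neg_mul_sq hb) (hint2.const_mul _), integral_const_mul,
    sub_eq_zero] at hz
  have hb' : (2*b) ≠ 0 := by positivity
  rw [hz]
  rw [← mul_assoc, inv_mul_cancel₀ hb', one_mul]

lemma aux_gauss_repr (v : ℝ≥0) (hv : v ≠ 0) (f : ℝ → ℝ) :
    ∫ x, f x ∂(gaussianReal 0 v) = ∫ x, gaussianPDFReal 0 v x * f x := by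
  rw [gaussianReal_of_var_ne_zero 0 hv]
  have hmeas : Measurable fun x => (gaussianPDFReal 0 v x).toNNReal :=
    (measurable_gaussianPDFReal 0 v).real_toNNReal
  have : ProbabilityTheory.gaussianPDF 0 v = fun x => ((gaussianPDFReal 0 v x).toNNReal : ℝ≥0∞) := rfl
  rw [this, integral_withDensity_eq_integral_smul hmeas]
  congr 1 with x
  simp [NNReal.smul_def, Real.coe_toNNReal _ (gaussianPDFReal_nonneg 0 v x)]

lemma aux_gauss_int_iff (v : ℝ≥0) (hv : v ≠ 0) (f : ℝ → ℝ) :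
    Integrable f (gaussianReal 0 v) ↔ Integrable (fun x => gaussianPDFReal 0 v x * f x) := by
  rw [gaussianReal_of_var_ne_zero 0 hv]
  have hmeas : Measurable fun x => (gaussianPDFReal 0 v x).toNNReal :=
    (measurable_gaussianPDFReal 0 v).real_toNNReal
  have h : ProbabilityTheory.gaussianPDF 0 v = fun x => ((gaussianPDFReal 0 v x).toNNReal : ℝ≥0∞) := rfl
  rw [h, integrable_withDensity_iff_integrable_smul hmeas]
  apply integrable_congr
  filter_upwards with x
  simp [NNReal.smul_def, Real.coe_toNNReal _ (gaussianPDFReal_nonneg 0 v x)]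

lemma aux_pdf_eq (v : ℝ≥0) (x : ℝ) :
    gaussianPDFReal 0 v x = (√(2 * π * v))⁻¹ * rexp (-(2*(v:ℝ))⁻¹ * x ^ 2) := by
  rw [gaussianPDFReal]
  congr 1
  rw [sub_zero]
  congr 1
  field_simp

lemma aux_gauss_facts (v : ℝ≥0) (hv : v ≠ 0) :
    Integrable (fun x : ℝ => x) (gaussianReal 0 v) ∧
    Integrable (fun x : ℝ => x ^ 2) (gaussianReal 0 v) ∧
    (∫ x, x ∂(gaussianReal 0 v)) = 0 ∧
    (∫ x, x ^ 2 ∂(gaussianReal 0 v)) = (v : ℝ) := by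
  have hvpos : (0:ℝ) < v := lt_of_le_of_ne v.coe_nonneg (by exact_mod_cast (Ne.symm hv))
  set b : ℝ := (2*(v:ℝ))⁻¹ with hbdef
  have hb : 0 < b := by positivity
  set c : ℝ := (√(2 * π * v))⁻¹ with hcdef
  have hpdf : ∀ x, gaussianPDFReal 0 v x = c * rexp (-b * x ^ 2) := fun x => aux_pdf_eq v x
  refine ⟨?_, ?_, ?_, ?_⟩
  · rw [aux_gauss_int_iff v hv]
    have : (fun x => gaussianPDFReal 0 v x * x) = fun x => c * (x * rexp (-b * x ^ 2)) := by
      funext x; rw [hpdf]; ring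
    rw [this]
    exact (integrable_mul_exp_neg_mul_sq hb).const_mul c
  · rw [aux_gauss_int_iff v hv]
    have : (fun x => gaussianPDFReal 0 v x * x ^ 2) = fun x => c * (x ^ 2 * rexp (-b * x ^ 2)) := by
      funext x; rw [hpdf]; ring
    rw [this]
    refine Integrable.const_mul ?_ c
    have := integrable_rpow_mul_exp_neg_mul_sq hb (s := 2) (by norm_num)
    simpa [Real.rpow_natCast] using this
  · rw [aux_gauss_repr v hv]
    have : (fun x => gaussianPDFReal 0 v x * x) = fun x => c * (x * rexp (-b * x ^ 2)) := by
      funext x; rw [hpdf]; ring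
    rw [this, integral_const_mul, aux_integral_id_mul_exp hb, mul_zero]
  · rw [aux_gauss_repr v hv]
    have h1 : (fun x => gaussianPDFReal 0 v x * x ^ 2) = fun x => c * (x ^ 2 * rexp (-b * x ^ 2)) := by
      funext x; rw [hpdf]; ring
    have hone : ∫ x, gaussianPDFReal 0 v x = 1 := integral_gaussianPDFReal_eq_one 0 hv
    have h2 : ∫ x, gaussianPDFReal 0 v x = c * ∫ x, rexp (-b * x ^ 2) := by
      simp_rw [hpdf]
      rw [integral_const_mul]
    rw [h1, integral_const_mul, aux_integral_sq_mul_exp hb]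
    have : c * ((2*b)⁻¹ * ∫ x, rexp (-b * x ^ 2)) = (2*b)⁻¹ * (c * ∫ x, rexp (-b * x ^ 2)) := by ring
    rw [this, ← h2, hone, mul_one, hbdef]
    field_simp

lemma aux_sq_integral_le {Ω : Type*} [MeasurableSpace Ω] (ν : Measure Ω) [IsFiniteMeasure ν]
    {f : Ω → ℝ} (hf : Integrable f ν) (hf2 : Integrable (fun ω => f ω ^ 2) ν) :
    (∫ ω, f ω ∂ν) ^ 2 ≤ (ν Set.univ).toReal * ∫ ω, f ω ^ 2 ∂ν := by
  set m : ℝ := (ν Set.univ).toReal with hm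
  have hm0 : 0 ≤ m := ENNReal.toReal_nonneg
  set I : ℝ := ∫ ω, f ω ∂ν with hI
  set J : ℝ := ∫ ω, f ω ^ 2 ∂ν with hJ
  rcases eq_or_lt_of_le hm0 with hmz | hmpos
  · have : ν = 0 := by
      rw [← Measure.measure_univ_eq_zero]
      have h0 : (ν Set.univ).toReal = 0 := by rw [← hm, ← hmz]
      exact ((ENNReal.toReal_eq_zero_iff _).mp h0).resolve_right (measure_ne_top ν _)
    have hI0 : I = 0 := by rw [hI, this, integral_zero_measure]
    rw [hI0]
    have hJ0 : 0 ≤ J := integral_nonneg fun ω => sq_nonneg _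
    nlinarith
  · have hexp : ∫ ω, (m * f ω - I) ^ 2 ∂ν = m ^ 2 * J - m * I ^ 2 := by
      have h1 : ∀ ω, (m * f ω - I) ^ 2 = m ^ 2 * f ω ^ 2 - (2 * m * I) * f ω + I ^ 2 := by
        intro ω; ring
      simp_rw [h1]
      have hsub : Integrable (fun ω => m ^ 2 * f ω ^ 2 - 2 * m * I * f ω) ν :=
        (hf2.const_mul _).sub (hf.const_mul _)
      have ha : Integrable (fun ω => m ^ 2 * f ω ^ 2) ν := hf2.const_mul _
      have hb : Integrable (fun ω => 2 * m * I * f ω) ν := hf.const_mul _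
      rw [integral_add hsub (integrable_const _), integral_sub ha hb, integral_const_mul,
        integral_const_mul, integral_const]
      simp only [smul_eq_mul, measureReal_def, ← hI, ← hJ, ← hm]
      ring
    have hpos : 0 ≤ ∫ ω, (m * f ω - I) ^ 2 ∂ν := integral_nonneg fun ω => sq_nonneg _
    rw [hexp] at hpos
    nlinarith

end Aux

set_option maxHeartbeats 1600000 in
/-- In the fixed-design Gaussian linear model `Y = Xβ* + ε` with `β*`
supported on `S = {1,…,s}`, a model-selection procedure `Ŝ` and the Select+Ridge
estimator `β̃` with parameter `μ > 0`, if the smallest eigenvalue of `C₁₁` is at least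
`Λ_min > 0`, then the squared bias satisfies
`‖E[β̃(Y)] − β*‖₂² ≤ (2μ²/(n²Λ_min²))·‖β*‖₂² + 2·P(Ŝ ≠ S)·(n/μ)·[(1/n)‖Xβ*‖₂² + σ²]`. -/
theorem selectRidge_bias_sq_le
    {Ω : Type*} [MeasurableSpace Ω] (P : Measure Ω) [IsProbabilityMeasure P]
    {n p s : ℕ} (hs : 0 < s) (hsn : s < n) (hsp : s ≤ p)
    (X : Matrix (Fin n) (Fin p) ℝ) (βstar : Fin p → ℝ)
    (hsupp : ∀ j : Fin p, s ≤ (j : ℕ) → βstar j = 0)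
    (XS : Matrix (Fin n) (Fin s) ℝ) (hXS : ∀ i k, XS i k = X i (Fin.castLE hsp k))
    (hrank : (XSᵀ * XS).PosDef)
    -- smallest eigenvalue of `C₁₁ = (1/n)X_SᵀX_S` is at least `Λmin > 0`
    (Λmin : ℝ) (hΛ : 0 < Λmin)
    (heig : ∀ v : Fin s → ℝ,
      Λmin * ∑ k, (v k) ^ 2 ≤ v ⬝ᵥ (((1 / (n : ℝ)) • (XSᵀ * XS)) *ᵥ v))
    (σ : ℝ) (hσ : 0 < σ) (ε : Ω → Fin n → ℝ)
    (hεmeas : ∀ i, Measurable fun ω => ε ω i)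
    (hindep : iIndepFun (fun i ω => ε ω i) P)
    (hgauss : ∀ i, P.map (fun ω => ε ω i) = gaussianReal 0 ⟨σ ^ 2, sq_nonneg σ⟩)
    (Y : Ω → Fin n → ℝ) (hY : ∀ ω, Y ω = X *ᵥ βstar + ε ω)
    (Shat : (Fin n → ℝ) → Set (Fin p)) (hShat : Measurable Shat)
    -- Select+Ridge estimator with parameter `μ`: supported on `Ŝ(y)` and satisfying
    -- the ridge normal equations on the selected coordinates
    (μ : ℝ) (hμ : 0 < μ)
    (βtilde : (Fin n → ℝ) → Fin p → ℝ) (hβmeas : Measurable βtilde)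
    (hRidge : ∀ y : Fin n → ℝ,
      (∀ j ∉ Shat y, βtilde y j = 0) ∧
      (∀ j ∈ Shat y, (Xᵀ *ᵥ (X *ᵥ βtilde y)) j + μ * βtilde y j = (Xᵀ *ᵥ y) j)) :
    ∑ j, ((∫ ω, βtilde (Y ω) j ∂P) - βstar j) ^ 2
      ≤ (2 * μ ^ 2 / ((n : ℝ) ^ 2 * Λmin ^ 2)) * ∑ j, (βstar j) ^ 2
        + 2 * (P {ω | Shat (Y ω) ≠ {j : Fin p | (j : ℕ) < s}}).toReal * ((n : ℝ) / μ) *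
          ((1 / (n : ℝ)) * ∑ i, ((X *ᵥ βstar) i) ^ 2 + σ ^ 2) := by
  classical
  have hn : 0 < n := lt_trans hs hsn
  have hnR : (0:ℝ) < (n:ℝ) := by exact_mod_cast hn
  -- Gaussian moments
  have hvne : (⟨σ ^ 2, sq_nonneg σ⟩ : NNReal) ≠ 0 := by
    intro h
    have : σ ^ 2 = 0 := congrArg NNReal.toReal h
    nlinarith
  obtain ⟨hgi1, hgi2, hgm1, hgm2⟩ := aux_gauss_facts _ hvne
  have hε1 : ∀ i, Integrable (fun ω => ε ω i) P := by
    intro i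
    have h := hgi1
    rw [← hgauss i] at h
    exact (integrable_map_measure aestronglyMeasurable_id (hεmeas i).aemeasurable).mp h
  have hε1m : ∀ i, ∫ ω, ε ω i ∂P = 0 := by
    intro i
    have h := integral_map (μ := P) (hεmeas i).aemeasurable
      (f := fun x : ℝ => x) aestronglyMeasurable_id
    rw [hgauss i, hgm1] at h
    exact h.symm
  have hε2 : ∀ i, Integrable (fun ω => ε ω i ^ 2) P := by
    intro i
    have h := hgi2
    rw [← hgauss i] at h
    exact (integrable_map_measure (measurable_id.pow_const 2).aestronglyMeasurable
      (hεmeas i).aemeasurable).mp h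
  have hε2m : ∀ i, ∫ ω, ε ω i ^ 2 ∂P = σ ^ 2 := by
    intro i
    have h := integral_map (μ := P) (hεmeas i).aemeasurable
      (f := fun x : ℝ => x ^ 2) (measurable_id.pow_const 2).aestronglyMeasurable
    rw [hgauss i, hgm2] at h
    exact h.symm
  -- the mean vector
  set m : Fin n → ℝ := X *ᵥ βstar with hmdef
  have hYi : ∀ ω i, Y ω i = m i + ε ω i := by
    intro ω i; rw [hY ω]; rfl
  have hYmeas : ∀ i, Measurable fun ω => Y ω i := by
    intro i
    have : (fun ω => Y ω i) = fun ω => m i + ε ω i := funext fun ω => hYi ω i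
    rw [this]
    exact (hεmeas i).const_add (m i)
  have hYmeasP : Measurable Y := measurable_pi_lambda _ hYmeas
  have hYint : ∀ i, Integrable (fun ω => Y ω i) P := by
    intro i
    have : (fun ω => Y ω i) = fun ω => m i + ε ω i := funext fun ω => hYi ω i
    rw [this]
    exact (integrable_const (m i)).add (hε1 i)
  have hYm : ∀ i, ∫ ω, Y ω i ∂P = m i := by
    intro i
    have h : (fun ω => Y ω i) = fun ω => m i + ε ω i := funext fun ω => hYi ω i
    rw [h, integral_add (integrable_const (m i)) (hε1 i), hε1m i, integral_const]
    simp
  have hYsq : ∀ i, Integrable (fun ω => Y ω i ^ 2) P := by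
    intro i
    have h : (fun ω => Y ω i ^ 2)
        = fun ω => (m i ^ 2 + (2 * m i) * ε ω i) + ε ω i ^ 2 := by
      funext ω; rw [hYi ω i]; ring
    rw [h]
    exact ((integrable_const _).add ((hε1 i).const_mul _)).add (hε2 i)
  have hYsqm : ∀ i, ∫ ω, Y ω i ^ 2 ∂P = m i ^ 2 + σ ^ 2 := by
    intro i
    have h : (fun ω => Y ω i ^ 2)
        = fun ω => (m i ^ 2 + (2 * m i) * ε ω i) + ε ω i ^ 2 := by
      funext ω; rw [hYi ω i]; ring
    have hA : Integrable (fun ω => m i ^ 2 + (2 * m i) * ε ω i) P :=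
      (integrable_const _).add ((hε1 i).const_mul _)
    have hB : Integrable (fun ω => (2 * m i) * ε ω i) P := (hε1 i).const_mul _
    rw [h, integral_add hA (hε2 i), integral_add (integrable_const _) hB, integral_const_mul,
      hε1m i, hε2m i, integral_const]
    simp
  have hg : Integrable (fun ω => ∑ i, Y ω i ^ 2) P :=
    integrable_finset_sum _ fun i _ => hYsq i
  have hgm : ∫ ω, ∑ i, Y ω i ^ 2 ∂P = ∑ i, m i ^ 2 + (n:ℝ) * σ ^ 2 := by
    rw [integral_finset_sum _ fun i _ => hYsq i]
    simp_rw [hYsqm]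
    rw [Finset.sum_add_distrib, Finset.sum_const, Finset.card_univ, Fintype.card_fin]
    simp [nsmul_eq_mul]
  have hgnn : ∀ ω, 0 ≤ ∑ i, Y ω i ^ 2 := fun ω => Finset.sum_nonneg fun i _ => sq_nonneg _
  -- sum over embedded support
  have hsum_emb : ∀ f : Fin p → ℝ, (∀ j : Fin p, ¬((j:ℕ) < s) → f j = 0) →
      ∑ j, f j = ∑ k, f (Fin.castLE hsp k) := by
    intro f hf
    have h1 : ∑ j ∈ Finset.univ.map (Fin.castLEEmb hsp), f j = ∑ k, f (Fin.castLE hsp k) :=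
      Finset.sum_map Finset.univ (Fin.castLEEmb hsp) f
    refine Eq.trans ?_ h1
    refine (Finset.sum_subset (Finset.subset_univ _) ?_).symm
    intro j _ hj
    refine hf j fun hlt => hj ?_
    refine Finset.mem_map.mpr ⟨⟨(j:ℕ), hlt⟩, Finset.mem_univ _, ?_⟩
    exact Fin.ext (by simp)
  -- sum swap
  have hswap : ∀ (β : Fin p → ℝ) (z : Fin n → ℝ),
      ∑ j, β j * (Xᵀ *ᵥ z) j = ∑ i, (X *ᵥ β) i * z i := by
    intro β z
    simp only [Matrix.mulVec, dotProduct, Matrix.transpose_apply, Finset.mul_sum,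
      Finset.sum_mul]
    rw [Finset.sum_comm]
    exact Finset.sum_congr rfl fun i _ => Finset.sum_congr rfl fun j _ => by ring
  -- supported vectors
  have hXmul : ∀ β : Fin p → ℝ, (∀ j : Fin p, ¬((j:ℕ) < s) → β j = 0) →
      X *ᵥ β = XS *ᵥ (fun k => β (Fin.castLE hsp k)) := by
    intro β hβ
    funext i
    show ∑ j, X i j * β j = ∑ k, XS i k * β (Fin.castLE hsp k)
    refine (hsum_emb (fun j => X i j * β j) (fun j hj => by simp [hβ j hj])).trans ?_
    exact Finset.sum_congr rfl fun k _ => by rw [hXS]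
  have hXt : ∀ (z : Fin n → ℝ) (k : Fin s),
      (Xᵀ *ᵥ z) (Fin.castLE hsp k) = (XSᵀ *ᵥ z) k := by
    intro z k
    show ∑ i, Xᵀ (Fin.castLE hsp k) i * z i = ∑ i, XSᵀ k i * z i
    exact Finset.sum_congr rfl fun i _ => by rw [Matrix.transpose_apply, Matrix.transpose_apply, hXS]
  -- the ridge matrix on the true support
  set M : Matrix (Fin s) (Fin s) ℝ := XSᵀ * XS + μ • (1 : Matrix (Fin s) (Fin s) ℝ) with hMdef
  have hμ1 : (μ • (1 : Matrix (Fin s) (Fin s) ℝ)).PosDef := by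
    rw [Matrix.smul_one_eq_diagonal]
    exact Matrix.PosDef.diagonal fun _ => hμ
  have hMpd : M.PosDef := Matrix.PosDef.posSemidef_add hrank.posSemidef hμ1
  have hMdet : IsUnit M.det := IsUnit.mk0 _ hMpd.det_pos.ne'
  have hMinvM : M⁻¹ * M = 1 := Matrix.nonsing_inv_mul M hMdet
  have hMMinv : M * M⁻¹ = 1 := Matrix.mul_nonsing_inv M hMdet
  -- the deterministic ridge solution on the true support
  set r : (Fin n → ℝ) → Fin p → ℝ := fun y j =>
    if h : (j:ℕ) < s then ((M⁻¹ * XSᵀ) *ᵥ y) ⟨(j:ℕ), h⟩ else 0 with hrdef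
  have hrval : ∀ (y : Fin n → ℝ) (k : Fin s),
      r y (Fin.castLE hsp k) = ((M⁻¹ * XSᵀ) *ᵥ y) k := by
    intro y k
    have hk : ((Fin.castLE hsp k : Fin p) : ℕ) < s := by simpa using k.isLt
    simp only [hrdef]
    rw [dif_pos hk]
    exact congrArg ((M⁻¹ * XSᵀ) *ᵥ y) (Fin.ext (by simp))
  have hrSupp : ∀ (y : Fin n → ℝ) (j : Fin p), ¬((j:ℕ) < s) → r y j = 0 := by
    intro y j hj
    simp only [hrdef]
    rw [dif_neg hj]
  have hMA : ∀ y : Fin n → ℝ, M *ᵥ ((M⁻¹ * XSᵀ) *ᵥ y) = XSᵀ *ᵥ y := by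
    intro y
    rw [Matrix.mulVec_mulVec, ← Matrix.mul_assoc, hMMinv, Matrix.one_mul]
  have hMexp : ∀ (w : Fin s → ℝ) (k : Fin s),
      (M *ᵥ w) k = (XSᵀ *ᵥ (XS *ᵥ w)) k + μ * w k := by
    intro w k
    have h : M *ᵥ w = XSᵀ *ᵥ (XS *ᵥ w) + μ • w := by
      rw [hMdef, Matrix.add_mulVec, Matrix.smul_mulVec, Matrix.one_mulVec,
        Matrix.mulVec_mulVec]
    rw [h]
    simp [smul_eq_mul]
  -- energy bound
  have hEnergy : ∀ (y : Fin n → ℝ) (β : Fin p → ℝ),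
      (∀ j, β j * ((Xᵀ *ᵥ (X *ᵥ β)) j + μ * β j) = β j * (Xᵀ *ᵥ y) j) →
      μ * ∑ j, β j ^ 2 ≤ (∑ i, y i ^ 2) / 4 := by
    intro y β hβ
    have e1 : ∑ j, (β j * (Xᵀ *ᵥ (X *ᵥ β)) j + μ * β j ^ 2) = ∑ j, β j * (Xᵀ *ᵥ y) j := by
      refine Finset.sum_congr rfl fun j _ => ?_
      linear_combination hβ j
    rw [Finset.sum_add_distrib, ← Finset.mul_sum] at e1
    rw [hswap β (X *ᵥ β), hswap β y] at e1
    have h2 : ∑ i, (X *ᵥ β) i * y i ≤ ∑ i, ((X *ᵥ β) i * (X *ᵥ β) i + y i ^ 2 / 4) :=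
      Finset.sum_le_sum fun i _ => by nlinarith [sq_nonneg ((X *ᵥ β) i - y i / 2)]
    rw [Finset.sum_add_distrib] at h2
    have h3 : ∑ i, y i ^ 2 / 4 = (∑ i, y i ^ 2) / 4 := by rw [Finset.sum_div]
    linarith
  have hβtE : ∀ y, μ * ∑ j, βtilde y j ^ 2 ≤ (∑ i, y i ^ 2) / 4 := by
    intro y
    refine hEnergy y _ fun j => ?_
    by_cases hj : j ∈ Shat y
    · rw [(hRidge y).2 j hj]
    · rw [(hRidge y).1 j hj]; ring
  have hrRidge : ∀ (y : Fin n → ℝ) (j : Fin p),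
      r y j * ((Xᵀ *ᵥ (X *ᵥ r y)) j + μ * r y j) = r y j * (Xᵀ *ᵥ y) j := by
    intro y j
    by_cases hj : (j:ℕ) < s
    · have hjeq : j = Fin.castLE hsp ⟨(j:ℕ), hj⟩ := Fin.ext (by simp)
      have hXr : X *ᵥ r y = XS *ᵥ (fun k => r y (Fin.castLE hsp k)) :=
        hXmul (r y) (hrSupp y)
      have hfun : (fun k => r y (Fin.castLE hsp k)) = (M⁻¹ * XSᵀ) *ᵥ y := funext (hrval y)
      have key : (Xᵀ *ᵥ (X *ᵥ r y)) j + μ * r y j = (Xᵀ *ᵥ y) j := by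
        rw [hjeq, hXt (X *ᵥ r y), hXt y, hXr, hfun, hrval, ← hMexp, hMA]
      rw [key]
    · rw [hrSupp y j hj]; ring
  have hrE : ∀ y, μ * ∑ j, r y j ^ 2 ≤ (∑ i, y i ^ 2) / 4 := fun y =>
    hEnergy y _ (hrRidge y)
  -- uniqueness of the ridge solution on the event Shat = S
  have hβr : ∀ y : Fin n → ℝ, Shat y = {j : Fin p | (j:ℕ) < s} → βtilde y = r y := by
    intro y hy
    have hz : ∀ j : Fin p, ¬((j:ℕ) < s) → βtilde y j = 0 := by
      intro j hj
      exact (hRidge y).1 j (by rw [hy]; exact hj)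
    have hXb : X *ᵥ βtilde y = XS *ᵥ (fun k => βtilde y (Fin.castLE hsp k)) := hXmul _ hz
    have heq : M *ᵥ (fun k => βtilde y (Fin.castLE hsp k)) = XSᵀ *ᵥ y := by
      funext k
      rw [hMexp]
      have hmem : Fin.castLE hsp k ∈ Shat y := by
        rw [hy]
        show ((Fin.castLE hsp k : Fin p) : ℕ) < s
        simpa using k.isLt
      have h2 := (hRidge y).2 _ hmem
      rw [hXt (X *ᵥ βtilde y) k, hXt y k, hXb] at h2
      exact h2
    have hb : (fun k => βtilde y (Fin.castLE hsp k)) = (M⁻¹ * XSᵀ) *ᵥ y := by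
      have h1 := congrArg (fun w => M⁻¹ *ᵥ w) heq
      rwa [Matrix.mulVec_mulVec, Matrix.mulVec_mulVec, hMinvM, Matrix.one_mulVec] at h1
    funext j
    by_cases hj : (j:ℕ) < s
    · have hjeq : j = Fin.castLE hsp ⟨(j:ℕ), hj⟩ := Fin.ext (by simp)
      rw [hjeq, hrval]
      exact congrFun hb ⟨(j:ℕ), hj⟩
    · rw [hz j hj, hrSupp y j hj]
  -- integrals of r ∘ Y
  have hrint : ∀ j, Integrable (fun ω => r (Y ω) j) P := by
    intro j
    by_cases hj : (j:ℕ) < s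
    · have hrep : ∀ w : Fin n → ℝ, r w j = ∑ i, (M⁻¹ * XSᵀ) ⟨(j:ℕ), hj⟩ i * w i := by
        intro w
        have hjeq : j = Fin.castLE hsp ⟨(j:ℕ), hj⟩ := Fin.ext (by simp)
        have h1 : r w j = ((M⁻¹ * XSᵀ) *ᵥ w) ⟨(j:ℕ), hj⟩ := by
          conv_lhs => rw [hjeq]
          exact hrval w ⟨(j:ℕ), hj⟩
        rw [h1]
        rfl
      have h : (fun ω => r (Y ω) j) = fun ω => ∑ i, (M⁻¹ * XSᵀ) ⟨(j:ℕ), hj⟩ i * Y ω i :=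
        funext fun ω => hrep (Y ω)
      rw [h]
      exact integrable_finset_sum _ fun i _ => (hYint i).const_mul _
    · have h : (fun ω => r (Y ω) j) = fun _ => (0:ℝ) := funext fun ω => hrSupp (Y ω) j hj
      rw [h]
      exact integrable_const 0
  have hrm : ∀ j, ∫ ω, r (Y ω) j ∂P = r m j := by
    intro j
    by_cases hj : (j:ℕ) < s
    · have hrep : ∀ w : Fin n → ℝ, r w j = ∑ i, (M⁻¹ * XSᵀ) ⟨(j:ℕ), hj⟩ i * w i := by
        intro w
        have hjeq : j = Fin.castLE hsp ⟨(j:ℕ), hj⟩ := Fin.ext (by simp)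
        have h1 : r w j = ((M⁻¹ * XSᵀ) *ᵥ w) ⟨(j:ℕ), hj⟩ := by
          conv_lhs => rw [hjeq]
          exact hrval w ⟨(j:ℕ), hj⟩
        rw [h1]
        rfl
      have h : (fun ω => r (Y ω) j) = fun ω => ∑ i, (M⁻¹ * XSᵀ) ⟨(j:ℕ), hj⟩ i * Y ω i :=
        funext fun ω => hrep (Y ω)
      rw [h, integral_finset_sum _ fun i _ => (hYint i).const_mul _, hrep m]
      refine Finset.sum_congr rfl fun i _ => ?_
      rw [integral_const_mul, hYm i]
    · have h : (fun ω => r (Y ω) j) = fun _ => (0:ℝ) := funext fun ω => hrSupp (Y ω) j hj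
      rw [h, hrSupp m j hj, integral_const]
      simp
  -- the bad event
  set Sset : Set (Fin p) := {j : Fin p | (j:ℕ) < s} with hSset
  set B : Set Ω := {ω | Shat (Y ω) ≠ Sset} with hBdef
  have hBmeas : MeasurableSet B :=
    ((hShat.comp hYmeasP) (MeasurableSet.singleton Sset)).compl
  -- integrability of βtilde ∘ Y
  have hβsq : ∀ (y : Fin n → ℝ) (j : Fin p), βtilde y j ^ 2 ≤ (∑ i, y i ^ 2) / (4 * μ) := by
    intro y j
    have h1 : βtilde y j ^ 2 ≤ ∑ j', βtilde y j' ^ 2 :=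
      Finset.single_le_sum (f := fun j' => βtilde y j' ^ 2) (fun j' _ => sq_nonneg _)
        (Finset.mem_univ j)
    have h2 := hβtE y
    rw [le_div_iff₀ (by positivity : (0:ℝ) < 4 * μ)]
    nlinarith [mul_le_mul_of_nonneg_left h1 hμ.le]
  have hrsq : ∀ (y : Fin n → ℝ) (j : Fin p), r y j ^ 2 ≤ (∑ i, y i ^ 2) / (4 * μ) := by
    intro y j
    have h1 : r y j ^ 2 ≤ ∑ j', r y j' ^ 2 :=
      Finset.single_le_sum (f := fun j' => r y j' ^ 2) (fun j' _ => sq_nonneg _)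
        (Finset.mem_univ j)
    have h2 := hrE y
    rw [le_div_iff₀ (by positivity : (0:ℝ) < 4 * μ)]
    nlinarith [mul_le_mul_of_nonneg_left h1 hμ.le]
  have hβintj : ∀ j, Integrable (fun ω => βtilde (Y ω) j) P := by
    intro j
    have hmeasj : Measurable fun ω => βtilde (Y ω) j :=
      (measurable_pi_apply j).comp (hβmeas.comp hYmeasP)
    have hGint : Integrable (fun ω => (1 + (∑ i, Y ω i ^ 2) / (4 * μ)) / 2) P :=
      ((integrable_const 1).add (hg.div_const _)).div_const 2
    refine hGint.mono' hmeasj.aestronglyMeasurable (ae_of_all _ fun ω => ?_)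
    have h1 := hβsq (Y ω) j
    rw [Real.norm_eq_abs]
    nlinarith [sq_abs (βtilde (Y ω) j), abs_nonneg (βtilde (Y ω) j),
      sq_nonneg (|βtilde (Y ω) j| - 1)]
  have hdiffint : ∀ j, Integrable (fun ω => βtilde (Y ω) j - r (Y ω) j) P :=
    fun j => (hβintj j).sub (hrint j)
  have hdiffsq : ∀ j, Integrable (fun ω => (βtilde (Y ω) j - r (Y ω) j) ^ 2) P := by
    intro j
    have hsm : AEStronglyMeasurable (fun ω => (βtilde (Y ω) j - r (Y ω) j) ^ 2) P := by
      have h := (hdiffint j).aestronglyMeasurable.mul (hdiffint j).aestronglyMeasurable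
      have he : (fun ω => (βtilde (Y ω) j - r (Y ω) j) ^ 2)
          = fun ω => (βtilde (Y ω) j - r (Y ω) j) * (βtilde (Y ω) j - r (Y ω) j) := by
        funext ω; ring
      rw [he]
      exact h
    refine (hg.div_const μ).mono' hsm (ae_of_all _ fun ω => ?_)
    rw [Real.norm_eq_abs, abs_of_nonneg (sq_nonneg _)]
    have h1 := hβsq (Y ω) j
    have h2 := hrsq (Y ω) j
    have h3 : (∑ i, Y ω i ^ 2) / μ = 4 * ((∑ i, Y ω i ^ 2) / (4 * μ)) := by
      field_simp
    rw [h3]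
    nlinarith [sq_nonneg (βtilde (Y ω) j + r (Y ω) j)]
  -- decomposition of the bias
  have hkey : ∀ j, (∫ ω, βtilde (Y ω) j ∂P) - βstar j
      = (r m j - βstar j) + ∫ ω in B, (βtilde (Y ω) j - r (Y ω) j) ∂P := by
    intro j
    have hzero : ∫ ω in Bᶜ, (βtilde (Y ω) j - r (Y ω) j) ∂P = 0 := by
      refine setIntegral_eq_zero_of_forall_eq_zero fun ω hω => ?_
      have hEq : Shat (Y ω) = Sset := not_not.mp hω
      rw [hβr (Y ω) hEq]
      ring
    have h0 : ∫ ω, (βtilde (Y ω) j - r (Y ω) j) ∂P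
        = ∫ ω in B, (βtilde (Y ω) j - r (Y ω) j) ∂P := by
      rw [← integral_add_compl hBmeas (hdiffint j), hzero, add_zero]
    have h1 : ∫ ω, (βtilde (Y ω) j - r (Y ω) j) ∂P
        = (∫ ω, βtilde (Y ω) j ∂P) - ∫ ω, r (Y ω) j ∂P :=
      integral_sub (hβintj j) (hrint j)
    have h2 : ∫ ω in B, (βtilde (Y ω) j - r (Y ω) j) ∂P
        = (∫ ω, βtilde (Y ω) j ∂P) - r m j := by
      rw [← h0, h1, hrm j]
    rw [h2]
    ring
  -- Bound for the deterministic part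
  have hsupp' : ∀ j : Fin p, ¬((j:ℕ) < s) → βstar j = 0 := fun j hj => hsupp j (not_lt.mp hj)
  set dv : Fin s → ℝ := fun k => ((M⁻¹ * XSᵀ) *ᵥ m) k - βstar (Fin.castLE hsp k) with hdv
  have hdsum : ∑ j, (r m j - βstar j) ^ 2 = ∑ k, dv k ^ 2 := by
    refine (hsum_emb (fun j => (r m j - βstar j) ^ 2)
      (fun j hj => by simp [hrSupp m j hj, hsupp' j hj])).trans ?_
    refine Finset.sum_congr rfl fun k _ => ?_
    show (r m (Fin.castLE hsp k) - βstar (Fin.castLE hsp k)) ^ 2 = dv k ^ 2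
    rw [hrval m k]
  have hmXS : m = XS *ᵥ (fun k => βstar (Fin.castLE hsp k)) := hXmul βstar hsupp'
  have hMd : M *ᵥ dv = (-μ) • (fun k => βstar (Fin.castLE hsp k)) := by
    have h1 : dv = (M⁻¹ * XSᵀ) *ᵥ m - (fun k => βstar (Fin.castLE hsp k)) := by
      funext k; simp [hdv]
    calc M *ᵥ dv
        = M *ᵥ ((M⁻¹ * XSᵀ) *ᵥ m) - M *ᵥ (fun k => βstar (Fin.castLE hsp k)) := by
          rw [h1, Matrix.mulVec_sub]
      _ = XSᵀ *ᵥ m - M *ᵥ (fun k => βstar (Fin.castLE hsp k)) := by rw [hMA]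
      _ = (-μ) • (fun k => βstar (Fin.castLE hsp k)) := by
          rw [hmXS, Matrix.mulVec_mulVec, hMdef, Matrix.add_mulVec,
            Matrix.smul_mulVec, Matrix.one_mulVec]
          funext k
          simp only [Pi.sub_apply, Pi.add_apply, Pi.smul_apply, Pi.neg_apply, smul_eq_mul,
            neg_mul]
          ring
  have hquad : ∀ w : Fin s → ℝ,
      w ⬝ᵥ (M *ᵥ w) = w ⬝ᵥ ((XSᵀ * XS) *ᵥ w) + μ * ∑ k, w k ^ 2 := by
    intro w
    have h : M *ᵥ w = (XSᵀ * XS) *ᵥ w + μ • w := by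
      rw [hMdef, Matrix.add_mulVec, Matrix.smul_mulVec, Matrix.one_mulVec]
    rw [h, dotProduct_add, dotProduct_smul, smul_eq_mul]
    have h2 : w ⬝ᵥ w = ∑ k, w k ^ 2 := by
      simp [dotProduct, pow_two]
    rw [h2]
  have heigM : ∀ w : Fin s → ℝ,
      (n:ℝ) * (Λmin * ∑ k, w k ^ 2) ≤ w ⬝ᵥ ((XSᵀ * XS) *ᵥ w) := by
    intro w
    have h := heig w
    have h2 : w ⬝ᵥ (((1 / (n:ℝ)) • (XSᵀ * XS)) *ᵥ w)
        = (1/(n:ℝ)) * (w ⬝ᵥ ((XSᵀ * XS) *ᵥ w)) := by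
      rw [Matrix.smul_mulVec, dotProduct_smul, smul_eq_mul]
    rw [h2] at h
    have h3 := mul_le_mul_of_nonneg_left h hnR.le
    calc (n:ℝ) * (Λmin * ∑ k, w k ^ 2)
        ≤ (n:ℝ) * ((1/(n:ℝ)) * (w ⬝ᵥ ((XSᵀ * XS) *ᵥ w))) := h3
      _ = w ⬝ᵥ ((XSᵀ * XS) *ᵥ w) := by field_simp
  have hboundA : ∑ j, (r m j - βstar j) ^ 2
      ≤ μ ^ 2 / ((n:ℝ) ^ 2 * Λmin ^ 2) * ∑ j, βstar j ^ 2 := by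
    have hD0 : 0 ≤ ∑ k, dv k ^ 2 := Finset.sum_nonneg fun k _ => sq_nonneg _
    have e1 : dv ⬝ᵥ (M *ᵥ dv) = -(μ * (dv ⬝ᵥ (fun k => βstar (Fin.castLE hsp k)))) := by
      rw [hMd, dotProduct_smul, smul_eq_mul]
      ring
    have e2 := hquad dv
    have e3 := heigM dv
    rw [e1] at e2
    have h1 : (n:ℝ) * (Λmin * ∑ k, dv k ^ 2) + μ * ∑ k, dv k ^ 2
        ≤ -(μ * (dv ⬝ᵥ (fun k => βstar (Fin.castLE hsp k)))) := by linarith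
    have hCS : (dv ⬝ᵥ (fun k => βstar (Fin.castLE hsp k))) ^ 2
        ≤ (∑ k, dv k ^ 2) * ∑ k, βstar (Fin.castLE hsp k) ^ 2 := by
      have h := Finset.sum_mul_sq_le_sq_mul_sq Finset.univ dv
        (fun k => βstar (Fin.castLE hsp k))
      exact h
    have hβsum : ∑ j, βstar j ^ 2 = ∑ k, βstar (Fin.castLE hsp k) ^ 2 :=
      hsum_emb _ (fun j hj => by simp [hsupp' j hj])
    rw [hdsum, hβsum]
    have hQ0 : 0 ≤ ∑ k, βstar (Fin.castLE hsp k) ^ 2 :=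
      Finset.sum_nonneg fun k _ => sq_nonneg _
    rcases eq_or_lt_of_le hD0 with h | h
    · rw [← h]; positivity
    · have ha : 0 ≤ (n:ℝ) * (Λmin * ∑ k, dv k ^ 2) := by positivity
      have hb : (n:ℝ) * (Λmin * ∑ k, dv k ^ 2)
          ≤ -(μ * (dv ⬝ᵥ (fun k => βstar (Fin.castLE hsp k)))) := by
        nlinarith [mul_nonneg hμ.le hD0]
      have h2 : ((n:ℝ) * (Λmin * ∑ k, dv k ^ 2)) ^ 2
          ≤ (μ * (dv ⬝ᵥ (fun k => βstar (Fin.castLE hsp k)))) ^ 2 := by nlinarith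
      have h4 : (n:ℝ) ^ 2 * Λmin ^ 2 * (∑ k, dv k ^ 2) ^ 2
          ≤ μ ^ 2 * ((∑ k, dv k ^ 2) * ∑ k, βstar (Fin.castLE hsp k) ^ 2) := by
        nlinarith [hCS, sq_nonneg μ]
      rw [div_mul_eq_mul_div, le_div_iff₀ (by positivity : (0:ℝ) < (n:ℝ) ^ 2 * Λmin ^ 2)]
      nlinarith [h4, h, hQ0]
  -- Bound for the stochastic part
  have hpt : ∀ y : Fin n → ℝ, ∑ j, (βtilde y j - r y j) ^ 2 ≤ (∑ i, y i ^ 2) / μ := by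
    intro y
    have h1 := hβtE y
    have h2 := hrE y
    have h3 : ∑ j, (βtilde y j - r y j) ^ 2
        ≤ 2 * ∑ j, βtilde y j ^ 2 + 2 * ∑ j, r y j ^ 2 := by
      rw [Finset.mul_sum, Finset.mul_sum, ← Finset.sum_add_distrib]
      exact Finset.sum_le_sum fun j _ => by nlinarith [sq_nonneg (βtilde y j + r y j)]
    rw [le_div_iff₀ hμ]
    nlinarith
  have hsum_wsq : ∑ j, (∫ ω in B, (βtilde (Y ω) j - r (Y ω) j) ∂P) ^ 2
      ≤ (P B).toReal * ((∑ i, m i ^ 2 + (n:ℝ) * σ ^ 2) / μ) := by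
    have hstep1 : ∀ j, (∫ ω in B, (βtilde (Y ω) j - r (Y ω) j) ∂P) ^ 2
        ≤ (P B).toReal * ∫ ω in B, (βtilde (Y ω) j - r (Y ω) j) ^ 2 ∂P := by
      intro j
      have h := aux_sq_integral_le (P.restrict B) ((hdiffint j).restrict)
        ((hdiffsq j).restrict)
      rwa [Measure.restrict_apply_univ] at h
    calc ∑ j, (∫ ω in B, (βtilde (Y ω) j - r (Y ω) j) ∂P) ^ 2
        ≤ ∑ j, (P B).toReal * ∫ ω in B, (βtilde (Y ω) j - r (Y ω) j) ^ 2 ∂P :=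
          Finset.sum_le_sum fun j _ => hstep1 j
      _ = (P B).toReal * ∫ ω in B, ∑ j, (βtilde (Y ω) j - r (Y ω) j) ^ 2 ∂P := by
          rw [← Finset.mul_sum, integral_finset_sum _ fun j _ => (hdiffsq j).restrict]
      _ ≤ (P B).toReal * ∫ ω in B, (∑ i, Y ω i ^ 2) / μ ∂P := by
          refine mul_le_mul_of_nonneg_left ?_ ENNReal.toReal_nonneg
          refine integral_mono (integrable_finset_sum _ fun j _ => (hdiffsq j).restrict)
            ((hg.div_const μ).restrict) fun ω => hpt (Y ω)
      _ ≤ (P B).toReal * ((∑ i, m i ^ 2 + (n:ℝ) * σ ^ 2) / μ) := by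
          refine mul_le_mul_of_nonneg_left ?_ ENNReal.toReal_nonneg
          have h1 : ∫ ω in B, (∑ i, Y ω i ^ 2) / μ ∂P ≤ ∫ ω, (∑ i, Y ω i ^ 2) / μ ∂P :=
            setIntegral_le_integral (hg.div_const μ)
              (ae_of_all _ fun ω => div_nonneg (hgnn ω) hμ.le)
          have h2 : ∫ ω, (∑ i, Y ω i ^ 2) / μ ∂P = (∑ i, m i ^ 2 + (n:ℝ) * σ ^ 2) / μ := by
            rw [integral_div, hgm]
          linarith
  -- final assembly
  calc ∑ j, ((∫ ω, βtilde (Y ω) j ∂P) - βstar j) ^ 2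
      = ∑ j, ((r m j - βstar j) + ∫ ω in B, (βtilde (Y ω) j - r (Y ω) j) ∂P) ^ 2 :=
        Finset.sum_congr rfl fun j _ => by rw [hkey j]
    _ ≤ ∑ j, (2 * (r m j - βstar j) ^ 2
          + 2 * (∫ ω in B, (βtilde (Y ω) j - r (Y ω) j) ∂P) ^ 2) :=
        Finset.sum_le_sum fun j _ => by
          nlinarith [sq_nonneg ((r m j - βstar j) - ∫ ω in B, (βtilde (Y ω) j - r (Y ω) j) ∂P)]
    _ = 2 * ∑ j, (r m j - βstar j) ^ 2
          + 2 * ∑ j, (∫ ω in B, (βtilde (Y ω) j - r (Y ω) j) ∂P) ^ 2 := by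
        rw [Finset.sum_add_distrib, Finset.mul_sum, Finset.mul_sum]
    _ ≤ 2 * (μ ^ 2 / ((n:ℝ) ^ 2 * Λmin ^ 2) * ∑ j, βstar j ^ 2)
          + 2 * ((P B).toReal * ((∑ i, m i ^ 2 + (n:ℝ) * σ ^ 2) / μ)) := by
        have := add_le_add (mul_le_mul_of_nonneg_left hboundA (by norm_num : (0:ℝ) ≤ 2))
          (mul_le_mul_of_nonneg_left hsum_wsq (by norm_num : (0:ℝ) ≤ 2))
        exact this
    _ = (2 * μ ^ 2 / ((n : ℝ) ^ 2 * Λmin ^ 2)) * ∑ j, (βstar j) ^ 2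
        + 2 * (P B).toReal * ((n : ℝ) / μ) * ((1 / (n : ℝ)) * ∑ i, m i ^ 2 + σ ^ 2) := by
        field_simp
end
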